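/- The index in SL_2(Z/nZ) of the subgroup of matrices congruent to [[1,*],[0,1]] equals n^2 · ∏_{p | n, p prime} (1 - p^{-2}). -/

import Mathlib

open Matrix Finset

namespace Stmt10Aux

attribute [local instance] Classical.propDecidable

variable {R : Type*} [CommRing R]

instance : MulAction (Matrix.SpecialLinearGroup (Fin 2) R) (Fin 2 → R) where
  smul M v := M.1.mulVec v
  one_smul v := by show (1 : Matrix.SpecialLinearGroup (Fin 2) R).1.mulVec v = v; simp
  mul_smul M N v := by
    show (M * N).1.mulVec v = M.1.mulVec (N.1.mulVec v)
    rw [Matrix.SpecialLinearGroup.coe_mul, Matrix.mulVec_mulVec]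

lemma smul_def (M : Matrix.SpecialLinearGroup (Fin 2) R) (v : Fin 2 → R) :
    M • v = M.1.mulVec v := rfl

/-- unimodular condition -/
def P (n : ℕ) (a c : ZMod n) : Prop := ∃ b d : ZMod n, a * d - b * c = 1

abbrev U (n : ℕ) : Type := {v : ZMod n × ZMod n // P n v.1 v.2}

lemma orbit_eq (n : ℕ) :
    MulAction.orbit (Matrix.SpecialLinearGroup (Fin 2) (ZMod n)) (![1,0] : Fin 2 → ZMod n)
      = {v | P n (v 0) (v 1)} := by
  ext v
  constructor
  · rintro ⟨M, rfl⟩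
    have hdet := M.2
    rw [Matrix.det_fin_two] at hdet
    refine ⟨M.1 0 1, M.1 1 1, ?_⟩
    simp only [smul_def, Matrix.mulVec, dotProduct, Fin.sum_univ_two]
    simp only [Matrix.cons_val_zero, Matrix.cons_val_one, Matrix.head_cons]
    ring_nf
    linear_combination hdet
  · rintro ⟨b, d, h⟩
    refine ⟨⟨!![v 0, b; v 1, d], by rw [Matrix.det_fin_two]; simpa using h⟩, ?_⟩
    funext i
    change (Matrix.mulVec !![v 0, b; v 1, d] ![1,0]) i = v i
    fin_cases i <;>
      simp [smul_def, Matrix.mulVec, dotProduct, Fin.sum_univ_two]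

lemma stab_eq (n : ℕ) (H : Subgroup (Matrix.SpecialLinearGroup (Fin 2) (ZMod n)))
    (hH : (H : Set (Matrix.SpecialLinearGroup (Fin 2) (ZMod n))) =
      {M | M.1 0 0 = 1 ∧ M.1 1 1 = 1 ∧ M.1 1 0 = 0}) :
    H = MulAction.stabilizer (Matrix.SpecialLinearGroup (Fin 2) (ZMod n))
      (![1,0] : Fin 2 → ZMod n) := by
  ext M
  rw [← SetLike.mem_coe, hH]
  have hdet := M.2
  rw [Matrix.det_fin_two] at hdet
  constructor
  · rintro ⟨h1, h2, h3⟩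
    rw [MulAction.mem_stabilizer_iff]
    funext i
    fin_cases i <;>
      simp [smul_def, Matrix.mulVec, dotProduct, Fin.sum_univ_two, h1, h2, h3]
  · intro h
    rw [MulAction.mem_stabilizer_iff] at h
    have h0 := congrFun h 0
    have h1 := congrFun h 1
    simp [smul_def, Matrix.mulVec, dotProduct, Fin.sum_univ_two] at h0 h1
    refine ⟨h0, ?_, h1⟩
    rw [h0, h1] at hdet
    simpa using hdet

lemma index_eq (n : ℕ) (H : Subgroup (Matrix.SpecialLinearGroup (Fin 2) (ZMod n)))
    (hH : (H : Set (Matrix.SpecialLinearGroup (Fin 2) (ZMod n))) =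
      {M | M.1 0 0 = 1 ∧ M.1 1 1 = 1 ∧ M.1 1 0 = 0}) :
    H.index = Nat.card (U n) := by
  rw [stab_eq n H hH, MulAction.index_stabilizer, ← Nat.card_coe_set_eq, orbit_eq]
  exact Nat.card_congr
    (Equiv.subtypeEquiv (α := Fin 2 → ZMod n) (β := ZMod n × ZMod n)
      (p := fun v => P n (v 0) (v 1)) (q := fun w => P n w.1 w.2)
      (piFinTwoEquiv (fun _ => ZMod n)) (fun v => Iff.rfl))



/-- transfer through a ring equiv -/
lemma exists_transfer {R S : Type*} [CommRing R] [CommRing S] (f : R ≃+* S) (x y : R) :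
    (∃ b d : R, x * d - b * y = 1) ↔ (∃ b d : S, f x * d - b * f y = 1) := by
  constructor
  · rintro ⟨b, d, h⟩
    exact ⟨f b, f d, by rw [← _root_.map_mul, ← _root_.map_mul, ← map_sub, h, _root_.map_one]⟩
  · rintro ⟨b, d, h⟩
    refine ⟨f.symm b, f.symm d, ?_⟩
    have := congrArg f.symm h
    rw [map_sub, _root_.map_mul, _root_.map_mul, _root_.map_one] at this
    simpa using this

lemma exists_prod {A B : Type*} [CommRing A] [CommRing B] (x y : A × B) :
    (∃ b d : A × B, x * d - b * y = 1) ↔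
      ((∃ b d : A, x.1 * d - b * y.1 = 1) ∧ (∃ b d : B, x.2 * d - b * y.2 = 1)) := by
  constructor
  · rintro ⟨b, d, h⟩
    exact ⟨⟨b.1, d.1, congrArg Prod.fst h⟩, ⟨b.2, d.2, congrArg Prod.snd h⟩⟩
  · rintro ⟨⟨b1, d1, h1⟩, ⟨b2, d2, h2⟩⟩
    exact ⟨(b1, b2), (d1, d2), Prod.ext h1 h2⟩

lemma cardU_mul {a b : ℕ} (hab : a.Coprime b) :
    Nat.card (U (a * b)) = Nat.card (U a) * Nat.card (U b) := by
  classical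
  let e := ZMod.chineseRemainder hab
  have E1 : U (a * b) ≃ {w : (ZMod a × ZMod b) × (ZMod a × ZMod b) //
      (∃ bb dd : ZMod a × ZMod b, w.1 * dd - bb * w.2 = 1)} :=
    Equiv.subtypeEquiv (e.toEquiv.prodCongr e.toEquiv)
      (fun v => exists_transfer e v.1 v.2)
  have E2 : {w : (ZMod a × ZMod b) × (ZMod a × ZMod b) //
      (∃ bb dd : ZMod a × ZMod b, w.1 * dd - bb * w.2 = 1)} ≃
      {u : (ZMod a × ZMod a) × (ZMod b × ZMod b) // P a u.1.1 u.1.2 ∧ P b u.2.1 u.2.2} :=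
    Equiv.subtypeEquiv (Equiv.prodProdProdComm (ZMod a) (ZMod b) (ZMod a) (ZMod b))
      (fun w => exists_prod w.1 w.2)
  have E3 : {u : (ZMod a × ZMod a) × (ZMod b × ZMod b) // P a u.1.1 u.1.2 ∧ P b u.2.1 u.2.2}
      ≃ U a × U b :=
    Equiv.subtypeProdEquivProd (p := fun x : ZMod a × ZMod a => P a x.1 x.2)
      (q := fun x : ZMod b × ZMod b => P b x.1 x.2)
  rw [Nat.card_congr (E1.trans (E2.trans E3)), Nat.card_prod]

lemma not_isUnit_dvd {p e : ℕ} (hp : p.Prime) (he : 0 < e) {a : ZMod (p ^ e)}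
    (h : ¬ IsUnit a) : (p : ZMod (p ^ e)) ∣ a := by
  haveI : NeZero (p ^ e) := ⟨pow_ne_zero e hp.pos.ne'⟩
  have ha : ((a.val : ℕ) : ZMod (p ^ e)) = a := ZMod.natCast_rightInverse a
  rw [← ha] at h
  rw [ZMod.isUnit_iff_coprime] at h
  rw [Nat.coprime_pow_right_iff he] at h
  rw [Nat.coprime_comm, hp.coprime_iff_not_dvd, not_not] at h
  rw [← ha]
  exact_mod_cast map_dvd (Nat.castRingHom (ZMod (p ^ e))) h

lemma P_pow {p e : ℕ} (hp : p.Prime) (he : 0 < e) (a c : ZMod (p ^ e)) :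
    P (p ^ e) a c ↔ (IsUnit a ∨ IsUnit c) := by
  constructor
  · rintro ⟨b, d, h⟩
    by_contra hcon
    push_neg at hcon
    have h1 := not_isUnit_dvd hp he hcon.1
    have h2 := not_isUnit_dvd hp he hcon.2
    have : (p : ZMod (p ^ e)) ∣ 1 := by
      rw [← h]; exact dvd_sub (h1.mul_right d) (h2.mul_left b)
    have hu : IsUnit (p : ZMod (p ^ e)) := isUnit_of_dvd_one this
    rw [ZMod.isUnit_prime_iff_not_dvd hp] at hu
    exact hu (dvd_pow_self p he.ne')
  · rintro (h | h)
    · obtain ⟨u, rfl⟩ := h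
      exact ⟨0, ↑u⁻¹, by simp [← Units.val_mul]⟩
    · obtain ⟨u, rfl⟩ := h
      exact ⟨-↑u⁻¹, 0, by simp [← Units.val_mul]⟩

lemma card_nonunits (m : ℕ) (hm : 0 < m) :
    Nat.card {a : ZMod m // ¬ IsUnit a} = m - m.totient := by
  haveI : NeZero m := ⟨hm.ne'⟩
  rw [Nat.card_eq_fintype_card, Fintype.card_subtype_compl]
  congr 1
  · exact ZMod.card m
  · rw [← ZMod.card_units_eq_totient m]
    refine Fintype.card_congr ⟨fun a => a.2.unit, fun u => ⟨u, u.isUnit⟩, ?_, ?_⟩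
    · intro a; ext; simp
    · intro u; ext; simp

lemma cardU_pow {p e : ℕ} (hp : p.Prime) (he : 0 < e) :
    Nat.card (U (p ^ e)) = (p ^ e) ^ 2 - (p ^ (e - 1)) ^ 2 := by
  haveI : NeZero (p ^ e) := ⟨pow_ne_zero e hp.pos.ne'⟩
  have E : U (p ^ e) ≃ {v : ZMod (p ^ e) × ZMod (p ^ e) // IsUnit v.1 ∨ IsUnit v.2} :=
    Equiv.subtypeEquivRight (fun v => P_pow hp he v.1 v.2)
  rw [Nat.card_congr E]
  have hcompl : Nat.card {v : ZMod (p ^ e) × ZMod (p ^ e) // ¬ (IsUnit v.1 ∨ IsUnit v.2)}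
      = (p ^ (e - 1)) ^ 2 := by
    have E2 : {v : ZMod (p ^ e) × ZMod (p ^ e) // ¬ (IsUnit v.1 ∨ IsUnit v.2)}
        ≃ {a : ZMod (p ^ e) // ¬ IsUnit a} × {a : ZMod (p ^ e) // ¬ IsUnit a} :=
      (Equiv.subtypeEquivRight (fun v => by tauto)).trans
        (Equiv.subtypeProdEquivProd
          (p := fun a : ZMod (p ^ e) => ¬ IsUnit a) (q := fun a : ZMod (p ^ e) => ¬ IsUnit a))
    rw [Nat.card_congr E2, Nat.card_prod, card_nonunits _ (pow_pos hp.pos e),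
      Nat.totient_prime_pow hp he, sq]
    set q := p ^ (e - 1) with hq
    have h1 : p ^ e = q * p := by
      conv_lhs => rw [show e = e - 1 + 1 from (Nat.succ_pred_eq_of_pos he).symm]
      rw [pow_succ]
    have e1 : q * (p - 1) = q * p - q := by rw [Nat.mul_sub, mul_one]
    have e2 : q ≤ q * p := Nat.le_mul_of_pos_right q hp.pos
    rw [h1, e1]
    have e3 : q * p - (q * p - q) = q := by omega
    rw [e3]
  rw [Nat.card_eq_fintype_card] at hcompl ⊢
  have key := Fintype.card_subtype_compl (fun v : ZMod (p ^ e) × ZMod (p ^ e) =>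
    IsUnit v.1 ∨ IsUnit v.2)
  rw [hcompl] at key
  have htot : Fintype.card (ZMod (p ^ e) × ZMod (p ^ e)) = (p ^ e) ^ 2 := by
    rw [Fintype.card_prod, ZMod.card, sq]
  rw [htot] at key
  have hle := Fintype.card_subtype_le (fun v : ZMod (p ^ e) × ZMod (p ^ e) =>
    IsUnit v.1 ∨ IsUnit v.2)
  rw [htot] at hle
  omega

lemma cardU_one : Nat.card (U 1) = 1 := by
  rw [Nat.card_eq_one_iff_unique]
  constructor
  · constructor
    intro a b
    apply Subtype.ext
    apply Subsingleton.elim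
  · exact ⟨⟨(0, 0), 0, 0, Subsingleton.elim _ _⟩⟩

lemma main (n : ℕ) : 0 < n →
    (Nat.card (U n) : ℚ) = (n : ℚ) ^ 2 * ∏ p ∈ n.primeFactors, (1 - ((p : ℚ))⁻¹ ^ 2) := by
  induction n using Nat.recOnPosPrimePosCoprime with
  | prime_pow p e hp he =>
    intro _
    rw [cardU_pow hp he]
    rw [Nat.primeFactors_pow p he.ne']
    rw [hp.primeFactors]
    rw [prod_singleton]
    have hple : (p ^ (e - 1)) ^ 2 ≤ (p ^ e) ^ 2 :=
      Nat.pow_le_pow_left (Nat.pow_le_pow_right hp.pos (Nat.sub_le e 1)) 2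
    rw [Nat.cast_sub hple]
    push_cast
    have hpQ : (p : ℚ) ≠ 0 := Nat.cast_ne_zero.mpr hp.pos.ne'
    have h1 : (p : ℚ) ^ e = p ^ (e - 1) * p := by
      conv_lhs => rw [show e = e - 1 + 1 from (Nat.succ_pred_eq_of_pos he).symm]
      rw [pow_succ]
    rw [h1]
    field_simp
  | zero => intro h; exact absurd h (by norm_num)
  | one => intro _; rw [cardU_one]; simp
  | coprime a b ha hb hab iha ihb =>
    intro _
    rw [cardU_mul hab, Nat.cast_mul, iha (by omega), ihb (by omega),
      hab.primeFactors_mul, prod_union hab.disjoint_primeFactors]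
    push_cast
    ring


end Stmt10Aux

theorem stmt_10 (n : ℕ) (hn : 0 < n)
    (H : Subgroup (Matrix.SpecialLinearGroup (Fin 2) (ZMod n)))
    (hH : (H : Set (Matrix.SpecialLinearGroup (Fin 2) (ZMod n))) =
      {M | M.1 0 0 = 1 ∧ M.1 1 1 = 1 ∧ M.1 1 0 = 0}) :
    (H.index : ℚ) = (n : ℚ) ^ 2 * ∏ p ∈ n.primeFactors, (1 - ((p : ℚ))⁻¹ ^ 2) := by
  rw [Stmt10Aux.index_eq n H hH]
  exact Stmt10Aux.main n hn
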